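/- Let k be a commutative ring, A a unital k-algebra, and (C_r)_{r≥0} a unital formal associative deformation of A. Let e, f : ℕ → A be two ⋆-idempotents (e ⋆ e = e and f ⋆ f = f, where (a ⋆ b)(n) = ∑_{i+j+l=n} C_i(a(j), b(l))) with the same classical limit e(0) = f(0). Then e and f are conjugate by a ⋆-invertible element starting at 1: there exist u, v : ℕ → A with u(0) = 1 = v(0), u ⋆ v = 1 = v ⋆ u (where 1 denotes the sequence (1, 0, 0, …)), and f = u ⋆ e ⋆ v. -/

import Mathlib

open Finset

variable {k : Type*} [CommRing k] {A : Type*} [Ring A] [Algebra k A]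

/-- The deformed (star) product of two formal series `a, b : ℕ → A`, with respect to a
formal deformation `(C_r)`:  `(a ⋆ b)(n) = ∑_{i+j+l=n} C_i(a(j), b(l))`. -/
def starMul (C : ℕ → A →ₗ[k] A →ₗ[k] A) (a b : ℕ → A) : ℕ → A :=
  fun n => ∑ p ∈ antidiagonal n, ∑ q ∈ antidiagonal p.2, C p.1 (a q.1) (b q.2)

/-- The unit `1 = (1, 0, 0, …)` of the deformed algebra. -/
def starOne : ℕ → A := fun n => if n = 0 then 1 else 0

lemma sum4_reassoc {M : Type*} [AddCommMonoid M] (n : ℕ) (F : ℕ → ℕ → ℕ → ℕ → ℕ → M) :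
    (∑ p ∈ antidiagonal n, ∑ q ∈ antidiagonal p.2, ∑ r ∈ antidiagonal q.1,
        ∑ s ∈ antidiagonal r.2, F p.1 r.1 s.1 s.2 q.2)
      = ∑ p ∈ antidiagonal n, ∑ q ∈ antidiagonal p.2, ∑ r ∈ antidiagonal q.2,
        ∑ s ∈ antidiagonal p.1, F s.1 s.2 q.1 r.1 r.2 := by
  rw [Finset.sum_sigma', Finset.sum_sigma', Finset.sum_sigma',
      Finset.sum_sigma', Finset.sum_sigma', Finset.sum_sigma']
  refine Finset.sum_bij'
    (fun z _ => ⟨⟨⟨(z.1.1.1.1 + z.1.2.1, z.2.1 + z.2.2 + z.1.1.2.2),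
        (z.2.1, z.2.2 + z.1.1.2.2)⟩, (z.2.2, z.1.1.2.2)⟩, (z.1.1.1.1, z.1.2.1)⟩)
    (fun w _ => ⟨⟨⟨(w.2.1, w.2.2 + w.1.1.2.1 + w.1.2.1 + w.1.2.2),
        (w.2.2 + w.1.1.2.1 + w.1.2.1, w.1.2.2)⟩, (w.2.2, w.1.1.2.1 + w.1.2.1)⟩,
        (w.1.1.2.1, w.1.2.1)⟩)
    ?_ ?_ ?_ ?_ ?_ <;>
    rintro ⟨⟨⟨⟨p1, p2⟩, ⟨q1, q2⟩⟩, ⟨r1, r2⟩⟩, ⟨s1, s2⟩⟩ hz <;>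
    simp only [Finset.mem_sigma, Finset.HasAntidiagonal.mem_antidiagonal, and_true, true_and,
      Sigma.mk.inj_iff, Prod.mk.injEq, heq_eq_eq] at hz ⊢ <;>
    omega

lemma sum4_reassoc' {M : Type*} [AddCommMonoid M] (n : ℕ) (F : ℕ → ℕ → ℕ → ℕ → ℕ → M) :
    (∑ p ∈ antidiagonal n, ∑ q ∈ antidiagonal p.2, ∑ r ∈ antidiagonal q.2,
        ∑ s ∈ antidiagonal r.2, F p.1 q.1 r.1 s.1 s.2)
      = ∑ p ∈ antidiagonal n, ∑ q ∈ antidiagonal p.2, ∑ r ∈ antidiagonal q.2,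
        ∑ s ∈ antidiagonal p.1, F s.1 q.1 s.2 r.1 r.2 := by
  rw [Finset.sum_sigma', Finset.sum_sigma', Finset.sum_sigma',
      Finset.sum_sigma', Finset.sum_sigma', Finset.sum_sigma']
  refine Finset.sum_bij'
    (fun z _ => ⟨⟨⟨(z.1.1.1.1 + z.1.2.1, z.1.1.2.1 + z.2.1 + z.2.2),
        (z.1.1.2.1, z.2.1 + z.2.2)⟩, (z.2.1, z.2.2)⟩, (z.1.1.1.1, z.1.2.1)⟩)
    (fun w _ => ⟨⟨⟨(w.2.1, w.1.1.2.1 + w.2.2 + w.1.2.1 + w.1.2.2),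
        (w.1.1.2.1, w.2.2 + w.1.2.1 + w.1.2.2)⟩, (w.2.2, w.1.2.1 + w.1.2.2)⟩,
        (w.1.2.1, w.1.2.2)⟩)
    ?_ ?_ ?_ ?_ ?_ <;>
    rintro ⟨⟨⟨⟨p1, p2⟩, ⟨q1, q2⟩⟩, ⟨r1, r2⟩⟩, ⟨s1, s2⟩⟩ hz <;>
    simp only [Finset.mem_sigma, Finset.HasAntidiagonal.mem_antidiagonal, and_true, true_and,
      Sigma.mk.inj_iff, Prod.mk.injEq, heq_eq_eq] at hz ⊢ <;>
    omega

lemma starMul_assoc (C : ℕ → A →ₗ[k] A →ₗ[k] A)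
    (hassoc : ∀ (n : ℕ) (a b c : A),
      ∑ p ∈ antidiagonal n, C p.1 (C p.2 a b) c =
      ∑ p ∈ antidiagonal n, C p.1 a (C p.2 b c))
    (a b c : ℕ → A) :
    starMul C (starMul C a b) c = starMul C a (starMul C b c) := by
  funext n
  show (∑ p ∈ antidiagonal n, ∑ q ∈ antidiagonal p.2, C p.1 (starMul C a b q.1) (c q.2))
     = ∑ p ∈ antidiagonal n, ∑ q ∈ antidiagonal p.2, C p.1 (a q.1) (starMul C b c q.2)
  have hL : ∀ (p q : ℕ × ℕ), C p.1 (starMul C a b q.1) (c q.2)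
      = ∑ r ∈ antidiagonal q.1, ∑ s ∈ antidiagonal r.2,
          C p.1 (C r.1 (a s.1) (b s.2)) (c q.2) := by
    intro p q
    simp only [starMul, map_sum, LinearMap.coe_sum, Finset.sum_apply]
  have hR : ∀ (p q : ℕ × ℕ), C p.1 (a q.1) (starMul C b c q.2)
      = ∑ r ∈ antidiagonal q.2, ∑ s ∈ antidiagonal r.2,
          C p.1 (a q.1) (C r.1 (b s.1) (c s.2)) := by
    intro p q
    simp only [starMul, map_sum]
  calc (∑ p ∈ antidiagonal n, ∑ q ∈ antidiagonal p.2, C p.1 (starMul C a b q.1) (c q.2))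
      = ∑ p ∈ antidiagonal n, ∑ q ∈ antidiagonal p.2, ∑ r ∈ antidiagonal q.1,
          ∑ s ∈ antidiagonal r.2, C p.1 (C r.1 (a s.1) (b s.2)) (c q.2) := by
        simp only [hL]
    _ = ∑ p ∈ antidiagonal n, ∑ q ∈ antidiagonal p.2, ∑ r ∈ antidiagonal q.2,
          ∑ s ∈ antidiagonal p.1, C s.1 (C s.2 (a q.1) (b r.1)) (c r.2) :=
        sum4_reassoc n (fun P R J L T => C P (C R (a J) (b L)) (c T))
    _ = ∑ p ∈ antidiagonal n, ∑ q ∈ antidiagonal p.2, ∑ r ∈ antidiagonal q.2,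
          ∑ s ∈ antidiagonal p.1, C s.1 (a q.1) (C s.2 (b r.1) (c r.2)) := by
        refine Finset.sum_congr rfl fun p _ => Finset.sum_congr rfl fun q _ =>
          Finset.sum_congr rfl fun r _ => ?_
        exact hassoc p.1 (a q.1) (b r.1) (c r.2)
    _ = ∑ p ∈ antidiagonal n, ∑ q ∈ antidiagonal p.2, ∑ r ∈ antidiagonal q.2,
          ∑ s ∈ antidiagonal r.2, C p.1 (a q.1) (C r.1 (b s.1) (c s.2)) :=
        (sum4_reassoc' n (fun P J R L T => C P (a J) (C R (b L) (c T)))).symm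
    _ = ∑ p ∈ antidiagonal n, ∑ q ∈ antidiagonal p.2, C p.1 (a q.1) (starMul C b c q.2) := by
        simp only [hR]

section AuxLemmas

variable (C : ℕ → A →ₗ[k] A →ₗ[k] A)

lemma starOne_starMul (hC0 : ∀ a b : A, C 0 a b = a * b)
    (hunital : ∀ r : ℕ, 1 ≤ r → ∀ a : A, C r 1 a = 0 ∧ C r a 1 = 0)
    (a : ℕ → A) : starMul C starOne a = a := by
  funext n
  show (∑ p ∈ antidiagonal n, ∑ q ∈ antidiagonal p.2, C p.1 (starOne q.1) (a q.2)) = a n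
  have h1 : ∀ p : ℕ × ℕ, p ∈ antidiagonal n →
      (∑ q ∈ antidiagonal p.2, C p.1 (starOne q.1) (a q.2)) = C p.1 1 (a p.2) := by
    intro p _
    rw [Finset.sum_eq_single (0, p.2)]
    · simp [starOne]
    · rintro ⟨q1, q2⟩ hq hne
      have hq' : q1 + q2 = p.2 := Finset.HasAntidiagonal.mem_antidiagonal.1 hq
      have hq1 : q1 ≠ 0 := by rintro rfl; exact hne (by simp at hq' ⊢; omega)
      simp [starOne, hq1]
    · intro h; exact absurd (by simp) h
  rw [Finset.sum_congr rfl h1, Finset.sum_eq_single (0, n)]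
  · rw [hC0]; simp
  · rintro ⟨p1, p2⟩ hp hne
    have hp' : p1 + p2 = n := Finset.HasAntidiagonal.mem_antidiagonal.1 hp
    have hp1 : p1 ≠ 0 := by rintro rfl; exact hne (by simp at hp' ⊢; omega)
    exact (hunital p1 (Nat.one_le_iff_ne_zero.2 hp1) (a p2)).1
  · intro h; exact absurd (by simp) h

lemma starMul_starOne (hC0 : ∀ a b : A, C 0 a b = a * b)
    (hunital : ∀ r : ℕ, 1 ≤ r → ∀ a : A, C r 1 a = 0 ∧ C r a 1 = 0)
    (a : ℕ → A) : starMul C a starOne = a := by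
  funext n
  show (∑ p ∈ antidiagonal n, ∑ q ∈ antidiagonal p.2, C p.1 (a q.1) (starOne q.2)) = a n
  have h1 : ∀ p : ℕ × ℕ, p ∈ antidiagonal n →
      (∑ q ∈ antidiagonal p.2, C p.1 (a q.1) (starOne q.2)) = C p.1 (a p.2) 1 := by
    intro p _
    rw [Finset.sum_eq_single (p.2, 0)]
    · simp [starOne]
    · rintro ⟨q1, q2⟩ hq hne
      have hq' : q1 + q2 = p.2 := Finset.HasAntidiagonal.mem_antidiagonal.1 hq
      have hq2 : q2 ≠ 0 := by rintro rfl; exact hne (by simp at hq' ⊢; omega)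
      simp [starOne, hq2]
    · intro h; exact absurd (by simp) h
  rw [Finset.sum_congr rfl h1, Finset.sum_eq_single (0, n)]
  · rw [hC0]; simp
  · rintro ⟨p1, p2⟩ hp hne
    have hp' : p1 + p2 = n := Finset.HasAntidiagonal.mem_antidiagonal.1 hp
    have hp1 : p1 ≠ 0 := by rintro rfl; exact hne (by simp at hp' ⊢; omega)
    exact (hunital p1 (Nat.one_le_iff_ne_zero.2 hp1) (a p2)).2
  · intro h; exact absurd (by simp) h

lemma starMul_add_left (a b c : ℕ → A) :
    starMul C (a + b) c = starMul C a c + starMul C b c := by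
  funext n
  simp [starMul, Pi.add_apply, map_add, LinearMap.add_apply, Finset.sum_add_distrib]

lemma starMul_add_right (a b c : ℕ → A) :
    starMul C a (b + c) = starMul C a b + starMul C a c := by
  funext n
  simp [starMul, Pi.add_apply, map_add, Finset.sum_add_distrib]

lemma starMul_zero_left (a : ℕ → A) : starMul C 0 a = 0 := by
  funext n; simp [starMul]

lemma starMul_zero_right (a : ℕ → A) : starMul C a 0 = 0 := by
  funext n; simp [starMul]

lemma starMul_coeff_zero (hC0 : ∀ a b : A, C 0 a b = a * b) (a b : ℕ → A) :
    starMul C a b 0 = a 0 * b 0 := by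
  simp [starMul, hC0]

lemma starMul_coeff_congr_right (a b b' : ℕ → A) (n : ℕ) (h : ∀ i ≤ n, b i = b' i) :
    starMul C a b n = starMul C a b' n := by
  refine Finset.sum_congr rfl fun p hp => Finset.sum_congr rfl fun q hq => ?_
  have h1 := Finset.HasAntidiagonal.mem_antidiagonal.1 hp
  have h2 := Finset.HasAntidiagonal.mem_antidiagonal.1 hq
  rw [h q.2 (by omega)]

lemma starMul_coeff_congr_left (a a' b : ℕ → A) (n : ℕ) (h : ∀ i ≤ n, a i = a' i) :
    starMul C a b n = starMul C a' b n := by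
  refine Finset.sum_congr rfl fun p hp => Finset.sum_congr rfl fun q hq => ?_
  have h1 := Finset.HasAntidiagonal.mem_antidiagonal.1 hp
  have h2 := Finset.HasAntidiagonal.mem_antidiagonal.1 hq
  rw [h q.1 (by omega)]

lemma starMul_coeff_eq_zero (a b : ℕ → A) (s t n : ℕ) (ha : ∀ i < s, a i = 0)
    (hb : ∀ i < t, b i = 0) (hn : n < s + t) : starMul C a b n = 0 := by
  refine Finset.sum_eq_zero fun p hp => Finset.sum_eq_zero fun q hq => ?_
  have h1 := Finset.HasAntidiagonal.mem_antidiagonal.1 hp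
  have h2 := Finset.HasAntidiagonal.mem_antidiagonal.1 hq
  rcases lt_or_ge q.1 s with h | h
  · rw [ha q.1 h]; simp
  · rw [hb q.2 (by omega)]; simp

end AuxLemmas

def DefSeq (_C : ℕ → A →ₗ[k] A →ₗ[k] A) : Type _ := ℕ → A

def defRing (C : ℕ → A →ₗ[k] A →ₗ[k] A)
    (hC0 : ∀ a b : A, C 0 a b = a * b)
    (hassoc : ∀ (n : ℕ) (a b c : A),
      ∑ p ∈ antidiagonal n, C p.1 (C p.2 a b) c =
      ∑ p ∈ antidiagonal n, C p.1 a (C p.2 b c))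
    (hunital : ∀ r : ℕ, 1 ≤ r → ∀ a : A, C r 1 a = 0 ∧ C r a 1 = 0) :
    Ring (DefSeq C) :=
  { (inferInstance : AddCommGroup (ℕ → A)) with
    mul := starMul C
    one := starOne
    mul_assoc := starMul_assoc C hassoc
    one_mul := starOne_starMul C hC0 hunital
    mul_one := starMul_starOne C hC0 hunital
    left_distrib := fun a b c => starMul_add_right C a b c
    right_distrib := fun a b c => starMul_add_left C a b c
    zero_mul := starMul_zero_left C
    mul_zero := starMul_zero_right C }


/-- For a unital formal associative deformation of a unital
`k`-algebra `A`, two `⋆`-idempotents `e`, `f` with the same classical limit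
`e(0) = f(0)` are conjugate by a `⋆`-invertible element starting at `1`:
`f = u ⋆ e ⋆ v` with `u ⋆ v = 1 = v ⋆ u` and `u(0) = 1 = v(0)`. -/
theorem star_idempotents_conjugate_of_eq_classical_limit
    (C : ℕ → A →ₗ[k] A →ₗ[k] A)
    (hC0 : ∀ a b : A, C 0 a b = a * b)
    (hassoc : ∀ (n : ℕ) (a b c : A),
      ∑ p ∈ antidiagonal n, C p.1 (C p.2 a b) c =
      ∑ p ∈ antidiagonal n, C p.1 a (C p.2 b c))
    (hunital : ∀ r : ℕ, 1 ≤ r → ∀ a : A, C r 1 a = 0 ∧ C r a 1 = 0)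
    (e f : ℕ → A)
    (he : starMul C e e = e) (hf : starMul C f f = f)
    (h0 : e 0 = f 0) :
    ∃ u v : ℕ → A, u 0 = 1 ∧ v 0 = 1 ∧
      starMul C u v = starOne ∧ starMul C v u = starOne ∧
      f = starMul C (starMul C u e) v := by
  letI : Ring (DefSeq C) := defRing C hC0 hassoc hunital
  -- coefficient facts
  have sum_coeff : ∀ (s : Finset ℕ) (g : ℕ → DefSeq C) (i : ℕ),
      (∑ j ∈ s, g j) i = ∑ j ∈ s, g j i := by
    intro s g i
    exact map_sum (AddMonoidHom.mk' (fun x : DefSeq C => x i) (fun _ _ => rfl)) g s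
  have hcoeff_mul : ∀ (x y : DefSeq C), (x * y) 0 = x 0 * y 0 :=
    fun x y => starMul_coeff_zero C hC0 x y
  -- invertibility of elements with leading coefficient 1
  have inv_exists : ∀ x : DefSeq C, x 0 = 1 → ∃ g : DefSeq C, g 0 = 1 ∧ x * g = 1 ∧ g * x = 1 := by
    intro x hx
    set m : DefSeq C := 1 - x with hm
    have hx' : x = 1 - m := by rw [hm]; abel
    have hm0 : m 0 = 0 := by
      show starOne 0 - x 0 = 0
      rw [hx]; show (1 : A) - 1 = 0; rw [sub_self]
    have hpow : ∀ j : ℕ, ∀ i < j, (m ^ j) i = 0 := by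
      intro j
      induction j with
      | zero => intro i hi; exact absurd hi (Nat.not_lt_zero i)
      | succ j ih =>
        intro i hi
        rw [pow_succ]
        exact starMul_coeff_eq_zero C (m ^ j) m j 1 i ih
          (by intro i hi; interval_cases i; exact hm0) (by omega)
    set g : DefSeq C := (fun n => (∑ j ∈ Finset.range (n + 1), m ^ j) n : ℕ → A) with hg
    have hgi : ∀ N : ℕ, ∀ i ≤ N, g i = (∑ j ∈ Finset.range (N + 1), m ^ j) i := by
      intro N i hiN
      show (∑ j ∈ Finset.range (i + 1), m ^ j) i = _
      rw [sum_coeff, sum_coeff]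
      refine Finset.sum_subset (by simp; omega) ?_
      intro j hj hj'
      simp only [Finset.mem_range] at hj hj'
      exact hpow j i (by omega)
    have hg0 : g 0 = 1 := by
      show (∑ j ∈ Finset.range 1, m ^ j) 0 = 1
      rw [Finset.range_one, Finset.sum_singleton, pow_zero]
      rfl
    have hSx : ∀ n : ℕ, x * (∑ j ∈ Finset.range (n + 1), m ^ j) = 1 - m ^ (n + 1) := by
      intro n
      rw [hx', ← neg_sub m 1, neg_mul, mul_geom_sum, neg_sub]
    have hxS : ∀ n : ℕ, (∑ j ∈ Finset.range (n + 1), m ^ j) * x = 1 - m ^ (n + 1) := by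
      intro n
      rw [hx', ← neg_sub m 1, mul_neg, geom_sum_mul, neg_sub]
    refine ⟨g, hg0, funext fun n => ?_, funext fun n => ?_⟩
    · have h1 : (x * g) n = (x * (∑ j ∈ Finset.range (n + 1), m ^ j)) n :=
        starMul_coeff_congr_right C x g _ n (fun i hi => hgi n i hi)
      rw [h1, hSx n]
      show (1 : DefSeq C) n - (m ^ (n + 1)) n = (1 : DefSeq C) n
      rw [hpow (n + 1) n (by omega), sub_zero]
    · have h1 : (g * x) n = ((∑ j ∈ Finset.range (n + 1), m ^ j) * x) n :=
        starMul_coeff_congr_left C g _ x n (fun i hi => hgi n i hi)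
      rw [h1, hxS n]
      show (1 : DefSeq C) n - (m ^ (n + 1)) n = (1 : DefSeq C) n
      rw [hpow (n + 1) n (by omega), sub_zero]
  -- the conjugating elements
  obtain ⟨E, hEe⟩ : ∃ E : DefSeq C, E = e := ⟨e, rfl⟩
  obtain ⟨F, hFe⟩ : ∃ F : DefSeq C, F = f := ⟨f, rfl⟩
  have hE : E * E = E := by rw [hEe]; exact he
  have hF : F * F = F := by rw [hFe]; exact hf
  have h0' : E 0 = F 0 := by rw [hEe, hFe]; exact h0
  have hE' : ∀ x : DefSeq C, E * (E * x) = E * x := fun x => by rw [← mul_assoc, hE]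
  have hF' : ∀ x : DefSeq C, F * (F * x) = F * x := fun x => by rw [← mul_assoc, hF]
  set u : DefSeq C := F * E + (1 - F) * (1 - E) with hu
  set v : DefSeq C := E * F + (1 - E) * (1 - F) with hv
  set z : DefSeq C := 1 - (E - F) * (E - F) with hz
  have huv : u * v = z := by
    rw [hu, hv, hz]
    simp only [mul_add, add_mul, mul_sub, sub_mul, mul_one, one_mul, mul_assoc, hE, hF, hE', hF']
    abel
  have hvu : v * u = z := by
    rw [hu, hv, hz]
    simp only [mul_add, add_mul, mul_sub, sub_mul, mul_one, one_mul, mul_assoc, hE, hF, hE', hF']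
    abel
  have hue : u * E = F * u := by
    rw [hu]
    simp only [mul_add, add_mul, mul_sub, sub_mul, mul_one, one_mul, mul_assoc, hE, hF, hE', hF']
    abel
  have hz0 : z 0 = 1 := by
    have hEF0 : (E - F) 0 = 0 := by
      show E 0 - F 0 = 0
      rw [h0', sub_self]
    show (1 : DefSeq C) 0 - ((E - F) * (E - F)) 0 = 1
    rw [hcoeff_mul (E - F) (E - F), hEF0, zero_mul, sub_zero]
    rfl
  obtain ⟨w, hw0, hzw, hwz⟩ := inv_exists z hz0
  have hcomm : Commute u z := by
    show u * z = z * u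
    conv_lhs => rw [← hvu]
    rw [← mul_assoc, huv]
  have hwu : w * u = u * w :=
    ((Commute.units_inv_right (u := Units.mk z w hzw hwz) hcomm)).eq.symm
  -- leading coefficients
  have hc : E 0 * E 0 = E 0 := by
    rw [hEe]
    have h := congrFun he 0
    rwa [starMul_coeff_zero C hC0 e e] at h
  have hone_sub : ∀ x : DefSeq C, (1 - x) 0 = 1 - x 0 := fun x => rfl
  have hu0 : u 0 = 1 := by
    show (F * E) 0 + ((1 - F) * (1 - E)) 0 = 1
    rw [hcoeff_mul, hcoeff_mul, hone_sub, hone_sub, ← h0']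
    calc E 0 * E 0 + (1 - E 0) * (1 - E 0)
        = E 0 * E 0 + (1 - E 0 - E 0 + E 0 * E 0) := by noncomm_ring
      _ = 1 := by rw [hc]; abel
  have hv0 : v 0 = 1 := by
    show (E * F) 0 + ((1 - E) * (1 - F)) 0 = 1
    rw [hcoeff_mul, hcoeff_mul, hone_sub, hone_sub, ← h0']
    calc E 0 * E 0 + (1 - E 0) * (1 - E 0)
        = E 0 * E 0 + (1 - E 0 - E 0 + E 0 * E 0) := by noncomm_ring
      _ = 1 := by rw [hc]; abel
  have hvw0 : (v * w) 0 = 1 := by rw [hcoeff_mul, hv0, hw0, one_mul]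
  refine ⟨u, v * w, hu0, hvw0, ?_, ?_, ?_⟩
  · show u * (v * w) = (1 : DefSeq C)
    rw [← mul_assoc, huv, hzw]
  · show (v * w) * u = (1 : DefSeq C)
    rw [mul_assoc, hwu, ← mul_assoc, hvu, hzw]
  · rw [← hEe, ← hFe]
    show F = (u * E) * (v * w)
    rw [← mul_assoc, hue, mul_assoc F u v, huv, mul_assoc, hzw, mul_one]
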